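/- Let ρ₁, ρ₂, ρ₃ be complex numbers with ρ₁ + ρ₂ + ρ₃ = 0. Then 2(|ρ₁|⁴ + |ρ₂|⁴ + |ρ₃|⁴) ≤ (|ρ₁|² + |ρ₂|² + |ρ₃|²)², with equality if and only if Im(ρ₁·conj(ρ₂)) = 0. -/

import Mathlib

/-- `χ ≤ 2ξ²`: every type I metric lies inside the circle C of Section 6.1, and
the equality case `Im(ρ₁·conj ρ₂) = 0` characterizes the super-energy
non-radiative fields lying on the circumference. -/
theorem belRobinson_chi_le_two_xi_sq (ρ₁ ρ₂ ρ₃ : ℂ) (hsum : ρ₁ + ρ₂ + ρ₃ = 0) :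
    2 * (‖ρ₁‖ ^ 4 + ‖ρ₂‖ ^ 4 + ‖ρ₃‖ ^ 4) ≤
      (‖ρ₁‖ ^ 2 + ‖ρ₂‖ ^ 2 + ‖ρ₃‖ ^ 2) ^ 2 ∧
    (2 * (‖ρ₁‖ ^ 4 + ‖ρ₂‖ ^ 4 + ‖ρ₃‖ ^ 4) =
        (‖ρ₁‖ ^ 2 + ‖ρ₂‖ ^ 2 + ‖ρ₃‖ ^ 2) ^ 2 ↔
      (ρ₁ * (starRingEnd ℂ) ρ₂).im = 0) := by
  have h3 : ρ₃ = -ρ₁ - ρ₂ := by linear_combination hsum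
  subst h3
  have habs2 : ∀ z : ℂ, ‖z‖ ^ 2 = z.re ^ 2 + z.im ^ 2 := by
    intro z
    rw [Complex.sq_norm, Complex.normSq_apply]; ring
  have habs4 : ∀ z : ℂ, ‖z‖ ^ 4 = (z.re ^ 2 + z.im ^ 2) ^ 2 := by
    intro z
    rw [show (4:ℕ) = 2 * 2 from rfl, pow_mul, habs2]
  have him : (ρ₁ * (starRingEnd ℂ) ρ₂).im = ρ₂.re * ρ₁.im - ρ₁.re * ρ₂.im := by
    simp [Complex.mul_im]; ring
  have key : (‖ρ₁‖ ^ 2 + ‖ρ₂‖ ^ 2 + ‖-ρ₁ - ρ₂‖ ^ 2) ^ 2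
      - 2 * (‖ρ₁‖ ^ 4 + ‖ρ₂‖ ^ 4 + ‖-ρ₁ - ρ₂‖ ^ 4)
      = 4 * (ρ₂.re * ρ₁.im - ρ₁.re * ρ₂.im) ^ 2 := by
    simp only [habs2, habs4, Complex.sub_re, Complex.sub_im, Complex.neg_re, Complex.neg_im]
    ring
  constructor
  · nlinarith [sq_nonneg (ρ₂.re * ρ₁.im - ρ₁.re * ρ₂.im)]
  · rw [him]
    constructor
    · intro h
      have : 4 * (ρ₂.re * ρ₁.im - ρ₁.re * ρ₂.im) ^ 2 = 0 := by linarith [key]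
      have h0 : (ρ₂.re * ρ₁.im - ρ₁.re * ρ₂.im) ^ 2 = 0 := by linarith
      exact pow_eq_zero_iff two_ne_zero |>.mp h0
    · intro h
      have : (ρ₂.re * ρ₁.im - ρ₁.re * ρ₂.im) ^ 2 = 0 := by rw [h]; ring
      linarith [key, this]
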